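/- arXiv:1204.2112 — 4 statements merged into one kernel-verified Lean document; each statement's English description precedes it below -/
import Mathlib

section
/- Let G be a complete t-partite graph with nonempty parts V_1, ..., V_t. The independence complex Δ_G of G is shellable if and only if at most one of the parts V_i has more than one element. -/
variable {V : Type*} [Fintype V] [DecidableEq V]


/-- `S` is an independent set of `G`. -/
def IsIndep (G : SimpleGraph V) (S : Set V) : Prop :=
  ∀ ⦃a b : V⦄, a ∈ S → b ∈ S → ¬ G.Adj a b

/-- `S` is a maximal independent set of `G`. -/
def IsMaxIndep (G : SimpleGraph V) (S : Set V) : Prop :=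
  IsIndep G S ∧ ∀ T : Set V, IsIndep G T → S ⊆ T → S = T


/-- `A` is a facet of the independence complex of `G`,
i.e. a maximal independent set viewed as a `Finset`. -/
def IsFacet (G : SimpleGraph V) (A : Finset V) : Prop :=
  IsIndep G (↑A) ∧ ∀ B : Finset V, IsIndep G (↑B) → A ⊆ B → A = B

/-- The independence complex of `G` is shellable: its facets can be ordered
`F 0, …, F (s-1)` so that for all `i < j` there are `v ∈ F j \ F i` and `l < j`
with `F j \ F l = {v}`. -/
def Shellable (G : SimpleGraph V) : Prop :=
  ∃ (s : ℕ) (F : Fin s → Finset V),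
    Function.Injective F ∧
    (∀ A : Finset V, IsFacet G A ↔ ∃ i, F i = A) ∧
    ∀ i j : Fin s, i < j →
      ∃ v ∈ F j, v ∉ F i ∧ ∃ l : Fin s, l < j ∧ F j \ F l = {v}

/-- A complete t-partite graph is shellable iff at most one part has more than
one element. -/
theorem stmt_4 (G : SimpleGraph V) (t : ℕ) (part : V → Fin t)
    (hsurj : Function.Surjective part)
    (hadj : ∀ a b : V, G.Adj a b ↔ part a ≠ part b) :
    Shellable G ↔
      ∀ i j : Fin t, 1 < (part ⁻¹' {i} : Set V).ncard →
        1 < (part ⁻¹' {j} : Set V).ncard → i = j := by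
  classical
  set P : Fin t → Finset V := fun i => Finset.univ.filter (fun v => part v = i) with hPdef
  have hPmem : ∀ i v, v ∈ P i ↔ part v = i := by intro i v; simp [hPdef]
  have hPcoe : ∀ i : Fin t, (part ⁻¹' {i} : Set V) = ↑(P i) := by
    intro i; ext v; simp [hPmem]
  have hPcard : ∀ i : Fin t, (part ⁻¹' {i} : Set V).ncard = (P i).card := by
    intro i; rw [hPcoe i, Set.ncard_coe_finset]
  have hPne : ∀ i, (P i).Nonempty := by
    intro i; obtain ⟨v, hv⟩ := hsurj i; exact ⟨v, (hPmem i v).mpr hv⟩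
  have hPinj : Function.Injective P := by
    intro i j h
    obtain ⟨v, hv⟩ := hPne i
    have h1 := (hPmem i v).mp hv
    have h2 := (hPmem j v).mp (h ▸ hv)
    rw [← h1, h2]
  have hPdisj : ∀ i j : Fin t, i ≠ j → Disjoint (P i) (P j) := by
    intro i j hij
    rw [Finset.disjoint_left]
    intro v hvi hvj
    exact hij (((hPmem i v).mp hvi).symm.trans ((hPmem j v).mp hvj))
  have hindep : ∀ S : Set V, IsIndep G S ↔ ∀ a ∈ S, ∀ b ∈ S, part a = part b := by
    intro S
    constructor
    · intro h a ha b hb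
      by_contra hne
      exact h ha hb ((hadj a b).mpr hne)
    · intro h a b ha hb hab
      exact ((hadj a b).mp hab) (h a ha b hb)
  have hPindep : ∀ i, IsIndep G (↑(P i)) := by
    intro i
    rw [hindep]
    intro a ha b hb
    simp only [Finset.mem_coe, hPmem] at ha hb
    rw [ha, hb]
  rcases Nat.eq_zero_or_pos t with ht0 | ht
  · subst ht0
    have hVempty : IsEmpty V := ⟨fun v => (part v).elim0⟩
    constructor
    · intro _ i; exact i.elim0
    · intro _
      refine ⟨1, fun _ => ∅, fun a b _ => Subsingleton.elim a b, ?_, ?_⟩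
      · intro A
        constructor
        · intro _; exact ⟨0, (Finset.eq_empty_of_isEmpty A).symm⟩
        · rintro ⟨i, rfl⟩
          refine ⟨fun a b ha => (hVempty.false a).elim, fun B _ _ => ?_⟩
          simp [Finset.eq_empty_of_isEmpty B]
      · intro i j hij
        fin_cases i; fin_cases j; simp at hij
  -- t ≥ 1 case
  have hfacet : ∀ A : Finset V, IsFacet G A ↔ ∃ i, A = P i := by
    intro A
    constructor
    · rintro ⟨hind, hmax⟩
      rcases A.eq_empty_or_nonempty with rfl | ⟨a, ha⟩
      · exfalso
        obtain ⟨v, hv⟩ := hsurj ⟨0, ht⟩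
        have : (∅ : Finset V) = {v} := by
          apply hmax
          · rw [hindep]; intro a ha b hb
            simp only [Finset.coe_singleton, Set.mem_singleton_iff] at ha hb
            rw [ha, hb]
          · exact Finset.empty_subset _
        exact Finset.singleton_ne_empty v this.symm
      · refine ⟨part a, ?_⟩
        apply hmax _ (hPindep (part a))
        intro b hb
        rw [hPmem]
        have := (hindep (↑A)).mp hind b (by exact_mod_cast hb) a (by exact_mod_cast ha)
        exact this
    · rintro ⟨i, rfl⟩
      refine ⟨hPindep i, fun B hB hsub => ?_⟩
      obtain ⟨a, ha⟩ := hPne i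
      apply Finset.Subset.antisymm hsub
      intro b hb
      rw [hPmem]
      have := (hindep (↑B)).mp hB b (by exact_mod_cast hb) a (by exact_mod_cast hsub ha)
      rw [this, (hPmem i a).mp ha]
  constructor
  · rintro ⟨s, F, hinj, hfa, hsh⟩ i j hi hj
    rw [hPcard] at hi hj
    by_contra hij
    -- every F b with something before it is a singleton
    have hsingle : ∀ a b : Fin s, a < b → (F b).card = 1 := by
      intro a b hab
      obtain ⟨v, hv, _, l, hl, hFl⟩ := hsh a b hab
      obtain ⟨k, hk⟩ := (hfacet (F l)).mp ((hfa (F l)).mpr ⟨l, rfl⟩)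
      obtain ⟨m, hm⟩ := (hfacet (F b)).mp ((hfa (F b)).mpr ⟨b, rfl⟩)
      have hlb : F l ≠ F b := fun h => (ne_of_lt hl) (hinj h)
      have hkm : k ≠ m := by
        intro h; apply hlb; rw [hk, hm, h]
      have : F b \ F l = F b := by
        rw [Finset.sdiff_eq_self_iff_disjoint, hk, hm]
        exact hPdisj m k hkm.symm
      rw [this] at hFl
      rw [hFl, Finset.card_singleton]
    obtain ⟨a, ha⟩ := (hfa (P i)).mp ((hfacet (P i)).mpr ⟨i, rfl⟩)
    obtain ⟨b, hb⟩ := (hfa (P j)).mp ((hfacet (P j)).mpr ⟨j, rfl⟩)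
    have hab : a ≠ b := by
      intro h; apply hij; apply hPinj; rw [← ha, ← hb, h]
    rcases lt_or_gt_of_ne hab with h | h
    · have := hsingle a b h; rw [hb] at this; omega
    · have := hsingle b a h; rw [ha] at this; omega
  · intro h
    have hbig : ∀ i j : Fin t, 1 < (P i).card → 1 < (P j).card → i = j := by
      intro i j hi hj
      exact h i j (by rwa [hPcard]) (by rwa [hPcard])
    set i0 : Fin t := if h' : ∃ i, 1 < (P i).card then h'.choose else ⟨0, ht⟩ with hi0
    have hsmall : ∀ j : Fin t, j ≠ i0 → (P j).card = 1 := by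
      intro j hj
      have h1 : 1 ≤ (P j).card := Finset.card_pos.mpr (hPne j)
      by_contra hc
      have hbigj : 1 < (P j).card := by omega
      have hex : ∃ i, 1 < (P i).card := ⟨j, hbigj⟩
      have : i0 = hex.choose := by rw [hi0, dif_pos hex]
      exact hj (hbig j i0 hbigj (this ▸ hex.choose_spec))
    set σ : Equiv.Perm (Fin t) := Equiv.swap ⟨0, ht⟩ i0 with hσ
    refine ⟨t, fun j => P (σ j), hPinj.comp σ.injective, ?_, ?_⟩
    · intro A
      rw [hfacet]
      constructor
      · rintro ⟨k, rfl⟩; exact ⟨σ.symm k, by simp⟩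
      · rintro ⟨k, rfl⟩; exact ⟨σ k, rfl⟩
    · intro i j hij
      have hj0 : j ≠ ⟨0, ht⟩ := by
        intro hjeq
        rw [hjeq] at hij
        exact absurd hij (by simp [Fin.lt_def])
      have hσj : σ j ≠ i0 := by
        intro hc
        exact hj0 (σ.injective (by rw [hc]; simp [hσ]))
      obtain ⟨v, hv⟩ := Finset.card_eq_one.mp (hsmall (σ j) hσj)
      have hσij : σ i ≠ σ j := fun hc => absurd (σ.injective hc) (ne_of_lt hij)
      refine ⟨v, by simp [hv], ?_, i, hij, ?_⟩
      · intro hvi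
        exact hσij (((hPmem (σ i) v).mp hvi).symm.trans
          ((hPmem (σ j) v).mp (by simp [hv])))
      · rw [Finset.sdiff_eq_self_iff_disjoint.mpr (hPdisj (σ j) (σ i) (Ne.symm hσij)), hv]
end

section
/- Let G be a complete t-partite graph with nonempty parts. The independence complex of G is vertex decomposable if and only if at most one of the parts has more than one element. -/
variable {V : Type*} [Fintype V] [DecidableEq V]


/-- Deletion of a vertex from a simplicial complex (as a set of finsets). -/
def delC (Δ : Set (Finset V)) (v : V) : Set (Finset V) := {A ∈ Δ | v ∉ A}

/-- Link of a vertex in a simplicial complex. -/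
def linkC (Δ : Set (Finset V)) (v : V) : Set (Finset V) :=
  {A | v ∉ A ∧ insert v A ∈ Δ}

/-- `A` is a facet (maximal face) of the complex `Δ`. -/
def IsFacetOf (Δ : Set (Finset V)) (A : Finset V) : Prop :=
  A ∈ Δ ∧ ∀ B ∈ Δ, A ⊆ B → A = B

/-- Vertex decomposability of a simplicial complex. -/
inductive VertexDecomposable : Set (Finset V) → Prop
  | simplex (Δ : Set (Finset V)) (h : Δ = ∅ ∨ ∃ F : Finset V, Δ = {A | A ⊆ F}) :
      VertexDecomposable Δ
  | step (Δ : Set (Finset V)) (v : V)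
      (hdel : VertexDecomposable (delC Δ v))
      (hlink : VertexDecomposable (linkC Δ v))
      (hnf : ∀ A ∈ linkC Δ v, ¬ IsFacetOf (delC Δ v) A) :
      VertexDecomposable Δ

/-- The independence complex of `G`: faces are the independent finsets. -/
def indComplex (G : SimpleGraph V) : Set (Finset V) :=
  {A : Finset V | IsIndep G (↑A)}

/-- Auxiliary: the "partition complex" of a labelling `p` restricted to `W`. -/
def PartComplex {ι : Type*} (p : V → ι) (W : Finset V) : Set (Finset V) :=
  {A | A ⊆ W ∧ ∀ x ∈ A, ∀ y ∈ A, p x = p y}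

lemma delC_partComplex {ι : Type*} (p : V → ι) (W : Finset V) (v : V) :
    delC (PartComplex p W) v = PartComplex p (W.erase v) := by
  ext A
  simp only [delC, PartComplex, Set.mem_setOf_eq, Finset.subset_erase]
  tauto

lemma partComplex_not_vd {ι : Type*} (p : V → ι) :
    ∀ Δ : Set (Finset V), VertexDecomposable Δ →
    ∀ (W : Finset V) (a b c d : V), a ∈ W → b ∈ W → c ∈ W → d ∈ W →
    a ≠ b → c ≠ d → p a = p b → p c = p d → p a ≠ p c →
    Δ ≠ PartComplex p W := by
  intro Δ h
  induction h with
  | simplex Δ hs =>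
    intro W a b c d ha hb hc hd hab hcd h1 h2 h3 hΔ
    subst hΔ
    rcases hs with hs | ⟨F, hF⟩
    · exact absurd hs (by
        intro he
        have : (∅ : Finset V) ∈ PartComplex p W := ⟨Finset.empty_subset _, by simp⟩
        rw [he] at this; exact this)
    · have hpair : ∀ x y : V, x ∈ W → y ∈ W → p x = p y → ({x, y} : Finset V) ∈ PartComplex p W := by
        intro x y hx hy hxy
        refine ⟨?_, ?_⟩
        · intro z hz
          rcases Finset.mem_insert.1 hz with rfl | hz
          · exact hx
          · rw [Finset.mem_singleton.1 hz]; exact hy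
        · intro z hz w hw
          have hz' : p z = p x := by
            rcases Finset.mem_insert.1 hz with rfl | hz
            · rfl
            · rw [Finset.mem_singleton.1 hz]; exact hxy.symm
          have hw' : p w = p x := by
            rcases Finset.mem_insert.1 hw with rfl | hw
            · rfl
            · rw [Finset.mem_singleton.1 hw]; exact hxy.symm
          rw [hz', hw']
      have hab' := hpair a b ha hb h1
      have hcd' := hpair c d hc hd h2
      rw [hF] at hab' hcd'
      have haF : a ∈ F := hab' (Finset.mem_insert_self a {b})
      have hcF : c ∈ F := hcd' (Finset.mem_insert_self c {d})
      have hac : ({a, c} : Finset V) ∈ PartComplex p W := by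
        rw [hF]
        intro z hz
        rcases Finset.mem_insert.1 hz with rfl | hz
        · exact haF
        · rw [Finset.mem_singleton.1 hz]; exact hcF
      exact h3 (hac.2 a (Finset.mem_insert_self a {c}) c
        (Finset.mem_insert.2 (Or.inr (Finset.mem_singleton_self c))))
  | step Δ v hdel hlink hnf ihdel ihlink =>
    intro W a b c d ha hb hc hd hab hcd h1 h2 h3 hΔ
    subst hΔ
    classical
    by_cases hv : v ∈ W ∧ ∃ w ∈ W, w ≠ v ∧ p w = p v
    · obtain ⟨hvW, w, hwW, hwv, hpw⟩ := hv
      set A0 : Finset V := (W.filter fun u => p u = p v).erase v with hA0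
      have hmemA0 : ∀ u : V, u ∈ A0 ↔ u ≠ v ∧ u ∈ W ∧ p u = p v := by
        intro u; simp [hA0, Finset.mem_erase, Finset.mem_filter, and_assoc]
      have hwA0 : w ∈ A0 := (hmemA0 w).2 ⟨hwv, hwW, hpw⟩
      have hA0W : A0 ⊆ W := fun u hu => ((hmemA0 u).1 hu).2.1
      have hA0p : ∀ u ∈ A0, p u = p v := fun u hu => ((hmemA0 u).1 hu).2.2
      have hA0link : A0 ∈ linkC (PartComplex p W) v := by
        refine ⟨Finset.notMem_erase v _, ?_, ?_⟩
        · exact Finset.insert_subset hvW hA0W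
        · intro x hx y hy
          have hx' : p x = p v := by
            rcases Finset.mem_insert.1 hx with rfl | hx
            · rfl
            · exact hA0p x hx
          have hy' : p y = p v := by
            rcases Finset.mem_insert.1 hy with rfl | hy
            · rfl
            · exact hA0p y hy
          rw [hx', hy']
      have hA0facet : IsFacetOf (delC (PartComplex p W) v) A0 := by
        refine ⟨⟨⟨hA0W, fun x hx y hy => by rw [hA0p x hx, hA0p y hy]⟩,
          Finset.notMem_erase v _⟩, ?_⟩
        rintro B ⟨⟨hBW, hBp⟩, hvB⟩ hAB
        refine Finset.Subset.antisymm hAB (fun x hx => ?_)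
        refine (hmemA0 x).2 ⟨?_, hBW hx, ?_⟩
        · rintro rfl; exact hvB hx
        · rw [hBp x hx w (hAB hwA0), hpw]
      exact hnf A0 hA0link hA0facet
    · push_neg at hv
      have hane : ∀ x y : V, x ∈ W → y ∈ W → x ≠ y → p x = p y → x ≠ v := by
        intro x y hx hy hxy hpxy hxv
        subst hxv
        exact hv hx y hy (Ne.symm hxy) (hpxy.symm)
      have ha' : a ∈ W.erase v := Finset.mem_erase.2 ⟨hane a b ha hb hab h1, ha⟩
      have hb' : b ∈ W.erase v := Finset.mem_erase.2 ⟨hane b a hb ha hab.symm h1.symm, hb⟩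
      have hc' : c ∈ W.erase v := Finset.mem_erase.2 ⟨hane c d hc hd hcd h2, hc⟩
      have hd' : d ∈ W.erase v := Finset.mem_erase.2 ⟨hane d c hd hc hcd.symm h2.symm, hd⟩
      exact ihdel (W.erase v) a b c d ha' hb' hc' hd' hab hcd h1 h2 h3
        (delC_partComplex p W v)

lemma vd_simplex_with_whiskers (F : Finset V) (hF : F.Nonempty) :
    ∀ X : Finset V, (∀ x ∈ X, x ∉ F) →
    VertexDecomposable {A : Finset V | A ⊆ F ∨ ∃ x ∈ X, A = {x}} := by
  intro X
  induction X using Finset.induction_on with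
  | empty =>
    intro _
    refine VertexDecomposable.simplex _ (Or.inr ⟨F, ?_⟩)
    ext A; simp
  | @insert x X hx ih =>
    intro hXF
    have hxF : x ∉ F := hXF x (Finset.mem_insert_self x X)
    have hdelEq : delC {A : Finset V | A ⊆ F ∨ ∃ y ∈ insert x X, A = {y}} x
        = {A : Finset V | A ⊆ F ∨ ∃ y ∈ X, A = {y}} := by
      ext A
      simp only [delC, Set.mem_setOf_eq, Finset.mem_insert]
      constructor
      · rintro ⟨hA | ⟨y, hy | hy, rfl⟩, hxA⟩
        · exact Or.inl hA
        · exact absurd (hy ▸ Finset.mem_singleton_self y) hxA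
        · exact Or.inr ⟨y, hy, rfl⟩
      · rintro (hA | ⟨y, hy, rfl⟩)
        · exact ⟨Or.inl hA, fun hxA => hxF (hA hxA)⟩
        · refine ⟨Or.inr ⟨y, Or.inr hy, rfl⟩, fun hxA => ?_⟩
          rw [Finset.mem_singleton] at hxA
          exact hx (hxA ▸ hy)
    have hlinkEq : linkC {A : Finset V | A ⊆ F ∨ ∃ y ∈ insert x X, A = {y}} x
        = {A : Finset V | A ⊆ (∅ : Finset V)} := by
      ext A
      simp only [linkC, Set.mem_setOf_eq, Finset.subset_empty]
      constructor
      · rintro ⟨hxA, hA | ⟨y, hy, hAy⟩⟩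
        · exact absurd (hA (Finset.mem_insert_self x A)) hxF
        · have hyx : y = x := by
            have := hAy ▸ Finset.mem_insert_self x A
            exact (Finset.mem_singleton.1 this).symm
          subst hyx
          ext z
          simp only [Finset.notMem_empty, iff_false]
          intro hz
          have : z ∈ ({y} : Finset V) := hAy ▸ Finset.mem_insert_of_mem hz
          rw [Finset.mem_singleton] at this
          exact hxA (this ▸ hz)
      · rintro rfl
        exact ⟨Finset.notMem_empty x,
          Or.inr ⟨x, Finset.mem_insert_self x X, by simp⟩⟩
    refine VertexDecomposable.step _ x ?_ ?_ ?_
    · rw [hdelEq]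
      exact ih (fun y hy => hXF y (Finset.mem_insert_of_mem hy))
    · rw [hlinkEq]
      exact VertexDecomposable.simplex _ (Or.inr ⟨∅, rfl⟩)
    · intro A hA hfacet
      rw [hlinkEq] at hA
      have hA0 : A = ∅ := Finset.subset_empty.1 hA
      subst hA0
      obtain ⟨f, hf⟩ := hF
      have hfmem : ({f} : Finset V) ∈ delC {A : Finset V | A ⊆ F ∨ ∃ y ∈ insert x X, A = {y}} x := by
        rw [hdelEq]
        exact Or.inl (Finset.singleton_subset_iff.2 hf)
      have := hfacet.2 {f} hfmem (Finset.empty_subset _)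
      exact (Finset.singleton_ne_empty f) this.symm

/-- A complete t-partite graph is vertex decomposable iff at most one part has
more than one element. -/
theorem stmt_7 (G : SimpleGraph V) (t : ℕ) (part : V → Fin t)
    (hsurj : Function.Surjective part)
    (hadj : ∀ a b : V, G.Adj a b ↔ part a ≠ part b) :
    VertexDecomposable (indComplex G) ↔
      ∀ i j : Fin t, 1 < (part ⁻¹' {i} : Set V).ncard →
        1 < (part ⁻¹' {j} : Set V).ncard → i = j := by
  classical
  have hind : ∀ A : Finset V, A ∈ indComplex G ↔ ∀ x ∈ A, ∀ y ∈ A, part x = part y := by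
    intro A
    simp only [indComplex, IsIndep, Set.mem_setOf_eq, Finset.mem_coe]
    constructor
    · intro h x hx y hy
      by_contra hne
      exact h hx hy ((hadj x y).2 hne)
    · intro h x y hx hy hAdj
      exact ((hadj x y).1 hAdj) (h x hx y hy)
  constructor
  · intro hVD i j hi hj
    by_contra hij
    obtain ⟨a, b, ha, hb, hab⟩ := (Set.one_lt_ncard_iff (Set.toFinite _)).1 hi
    obtain ⟨c, d, hc, hd, hcd⟩ := (Set.one_lt_ncard_iff (Set.toFinite _)).1 hj
    have hΔ : indComplex G = PartComplex part Finset.univ := by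
      ext A
      rw [hind A]
      simp [PartComplex]
    refine partComplex_not_vd part (indComplex G) hVD Finset.univ a b c d
      (Finset.mem_univ a) (Finset.mem_univ b) (Finset.mem_univ c) (Finset.mem_univ d)
      hab hcd ?_ ?_ ?_ hΔ
    · rw [Set.mem_preimage, Set.mem_singleton_iff] at ha hb; rw [ha, hb]
    · rw [Set.mem_preimage, Set.mem_singleton_iff] at hc hd; rw [hc, hd]
    · rw [Set.mem_preimage, Set.mem_singleton_iff] at ha hc
      rw [ha, hc]; exact hij
  · intro h
    rcases isEmpty_or_nonempty V with hV | hV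
    · refine VertexDecomposable.simplex _ (Or.inr ⟨∅, ?_⟩)
      ext A
      have hA : A = ∅ := Finset.eq_empty_of_forall_notMem (fun x _ => hV.elim x)
      subst hA
      simp only [Set.mem_setOf_eq, Finset.Subset.refl, iff_true]
      rw [hind]; intro x hx; exact absurd hx (Finset.notMem_empty x)
    · -- choose the "big" part index i0
      obtain ⟨i0, hi0⟩ : ∃ i0 : Fin t, ∀ j : Fin t, j ≠ i0 → (part ⁻¹' {j} : Set V).ncard ≤ 1 := by
        by_cases hbig : ∃ i, 1 < (part ⁻¹' {i} : Set V).ncard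
        · obtain ⟨i, hi⟩ := hbig
          refine ⟨i, fun j hj => ?_⟩
          by_contra hj'
          exact hj (h j i (lt_of_not_ge hj') hi)
        · push_neg at hbig
          exact ⟨part (Classical.arbitrary V), fun j _ => hbig j⟩
      have hsmall : ∀ x y : V, part x ≠ i0 → part x = part y → x = y := by
        intro x y hx hxy
        by_contra hne
        have : 1 < (part ⁻¹' {part x} : Set V).ncard :=
          (Set.one_lt_ncard_iff (Set.toFinite _)).2 ⟨x, y, rfl, hxy.symm, hne⟩
        exact absurd (hi0 (part x) hx) (not_le.2 this)
      set F : Finset V := Finset.univ.filter (fun x => part x = i0) with hFdef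
      have hFmem : ∀ x : V, x ∈ F ↔ part x = i0 := by
        intro x; simp [hFdef]
      have hFne : F.Nonempty := by
        obtain ⟨v, hv⟩ := hsurj i0
        exact ⟨v, (hFmem v).2 hv⟩
      have hΔ : indComplex G = {A : Finset V | A ⊆ F ∨ ∃ x ∈ Fᶜ, A = {x}} := by
        ext A
        rw [hind A]
        constructor
        · intro hconst
          rcases A.eq_empty_or_nonempty with rfl | ⟨a, ha⟩
          · exact Or.inl (Finset.empty_subset F)
          · by_cases hai : part a = i0
            · refine Or.inl (fun x hx => (hFmem x).2 ?_)
              rw [hconst x hx a ha, hai]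
            · refine Or.inr ⟨a, ?_, ?_⟩
              · rw [Finset.mem_compl]; intro hmem
                exact hai ((hFmem a).1 hmem)
              · ext y
                rw [Finset.mem_singleton]
                constructor
                · intro hy
                  exact (hsmall a y hai (hconst a ha y hy)).symm
                · rintro rfl; exact ha
        · rintro (hAF | ⟨x, _, rfl⟩)
          · intro z hz y hy
            rw [(hFmem z).1 (hAF hz), (hFmem y).1 (hAF hy)]
          · intro z hz y hy
            rw [Finset.mem_singleton] at hz hy
            rw [hz, hy]
      rw [hΔ]
      exact vd_simplex_with_whiskers F hFne Fᶜ (fun x hx => Finset.mem_compl.1 hx)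
end

section
/- A complete t-partite graph with nonempty parts V_1, ..., V_t is unmixed (all minimal vertex covers have the same cardinality) if and only if all parts V_i have the same number of elements. -/
variable {V : Type*} [Fintype V] [DecidableEq V]


/-- `C` is a vertex cover of `G`. -/
def IsVC (G : SimpleGraph V) (C : Set V) : Prop :=
  ∀ ⦃a b : V⦄, G.Adj a b → a ∈ C ∨ b ∈ C

/-- `C` is a minimal vertex cover of `G`. -/
def IsMinVC (G : SimpleGraph V) (C : Set V) : Prop :=
  IsVC G C ∧ ∀ D : Set V, D ⊆ C → IsVC G D → D = C

lemma vc_compl_part (G : SimpleGraph V) (t : ℕ) (part : V → Fin t)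
    (hsurj : Function.Surjective part)
    (hadj : ∀ a b : V, G.Adj a b ↔ part a ≠ part b) (i : Fin t) :
    IsMinVC G ((part ⁻¹' {i})ᶜ) := by
  constructor
  · intro a b hab
    by_contra h
    push_neg at h
    simp only [Set.mem_compl_iff, Set.mem_preimage, Set.mem_singleton_iff, not_not] at h
    exact (hadj a b).1 hab (h.1.trans h.2.symm)
  · intro D hD hDvc
    apply Set.Subset.antisymm hD
    intro v hv
    by_contra hvD
    obtain ⟨w, hw⟩ := hsurj i
    simp only [Set.mem_compl_iff, Set.mem_preimage, Set.mem_singleton_iff] at hv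
    have hvw : G.Adj v w := (hadj v w).2 (by rw [hw]; exact hv)
    rcases hDvc hvw with h | h
    · exact hvD h
    · have := hD h
      simp [Set.mem_compl_iff, hw] at this

lemma minvc_classify (G : SimpleGraph V) (t : ℕ) (part : V → Fin t)
    (hsurj : Function.Surjective part)
    (hadj : ∀ a b : V, G.Adj a b ↔ part a ≠ part b) [Nonempty V]
    {C : Set V} (hC : IsMinVC G C) : ∃ i, C = (part ⁻¹' {i})ᶜ := by
  have key : ∃ i : Fin t, (part ⁻¹' {i})ᶜ ⊆ C := by
    by_cases h : ∃ v, v ∉ C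
    · obtain ⟨v, hv⟩ := h
      refine ⟨part v, fun w hw => ?_⟩
      simp only [Set.mem_compl_iff, Set.mem_preimage, Set.mem_singleton_iff] at hw
      have hvw : G.Adj v w := (hadj v w).2 (fun heq => hw heq.symm)
      rcases hC.1 hvw with h | h
      · exact absurd h hv
      · exact h
    · push_neg at h
      exact ⟨part (Classical.arbitrary V), fun w _ => h w⟩
  obtain ⟨i, hi⟩ := key
  exact ⟨i, (hC.2 _ hi (vc_compl_part G t part hsurj hadj i).1).symm⟩

/-- A complete t-partite graph is unmixed iff all parts have the same number of
elements. -/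
theorem stmt_8 (G : SimpleGraph V) (t : ℕ) (part : V → Fin t)
    (hsurj : Function.Surjective part)
    (hadj : ∀ a b : V, G.Adj a b ↔ part a ≠ part b) :
    (∀ C D : Set V, IsMinVC G C → IsMinVC G D → C.ncard = D.ncard) ↔
      ∀ i j : Fin t, (part ⁻¹' {i} : Set V).ncard = (part ⁻¹' {j} : Set V).ncard := by
  constructor
  · intro h i j
    have h1 := h _ _ (vc_compl_part G t part hsurj hadj i) (vc_compl_part G t part hsurj hadj j)
    have ki := Set.ncard_add_ncard_compl (part ⁻¹' {i} : Set V)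
    have kj := Set.ncard_add_ncard_compl (part ⁻¹' {j} : Set V)
    omega
  · intro h C D hC hD
    by_cases hV : Nonempty V
    · obtain ⟨i, rfl⟩ := minvc_classify G t part hsurj hadj hC
      obtain ⟨j, rfl⟩ := minvc_classify G t part hsurj hadj hD
      have hij := h i j
      have ki := Set.ncard_add_ncard_compl (part ⁻¹' {i} : Set V)
      have kj := Set.ncard_add_ncard_compl (part ⁻¹' {j} : Set V)
      omega
    · rw [not_nonempty_iff] at hV
      rw [Set.eq_empty_of_isEmpty C, Set.eq_empty_of_isEmpty D]
end

section
/- For a complete t-partite graph G with nonempty parts, the independence complex of G is shellable if and only if it is vertex decomposable. -/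
set_option linter.unusedSectionVars false


variable {V : Type*} [Fintype V] [DecidableEq V]


section A
variable {t : ℕ} (part : V → Fin t)

def pfib (i : Fin t) : Finset V := Finset.univ.filter (fun v => part v = i)

lemma mem_pfib {i : Fin t} {v : V} : v ∈ pfib part i ↔ part v = i := by
  simp [pfib]

lemma pfib_nonempty (hsurj : Function.Surjective part) (i : Fin t) :
    (pfib part i).Nonempty := by
  obtain ⟨v, hv⟩ := hsurj i
  exact ⟨v, (mem_pfib part).2 hv⟩

lemma pfib_disjoint {i j : Fin t} (h : i ≠ j) : Disjoint (pfib part i) (pfib part j) := by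
  rw [Finset.disjoint_left]
  intro a ha haj
  exact h (((mem_pfib part).1 ha).symm.trans ((mem_pfib part).1 haj))

lemma pfib_injective (hsurj : Function.Surjective part) : Function.Injective (pfib part) := by
  intro i j h
  obtain ⟨a, ha⟩ := pfib_nonempty part hsurj i
  have ha' := ha
  rw [h] at ha'
  exact ((mem_pfib part).1 ha).symm.trans ((mem_pfib part).1 ha')

variable (G : SimpleGraph V)

lemma indep_iff (hadj : ∀ a b : V, G.Adj a b ↔ part a ≠ part b) (A : Finset V) :
    IsIndep G (↑A) ↔ ∀ a ∈ A, ∀ b ∈ A, part a = part b := by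
  constructor
  · intro h a ha b hb
    by_contra hne
    exact h (Finset.mem_coe.2 ha) (Finset.mem_coe.2 hb) ((hadj a b).2 hne)
  · intro h a b ha hb hab
    exact (hadj a b).1 hab (h a (Finset.mem_coe.1 ha) b (Finset.mem_coe.1 hb))

lemma facet_iff (hsurj : Function.Surjective part)
    (hadj : ∀ a b : V, G.Adj a b ↔ part a ≠ part b) (ht : 0 < t) (A : Finset V) :
    IsFacet G A ↔ ∃ i, A = pfib part i := by
  have hfi : ∀ i, IsIndep G (↑(pfib part i)) := by
    intro i
    rw [indep_iff part G hadj]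
    intro a ha b hb
    rw [(mem_pfib part).1 ha, (mem_pfib part).1 hb]
  constructor
  · rintro ⟨hi, hmax⟩
    have : ∃ i, A ⊆ pfib part i := by
      rw [indep_iff part G hadj] at hi
      rcases A.eq_empty_or_nonempty with rfl | ⟨a, ha⟩
      · exact ⟨⟨0, ht⟩, by simp⟩
      · exact ⟨part a, fun b hb => (mem_pfib part).2 (hi b hb a ha)⟩
    obtain ⟨i, hAi⟩ := this
    exact ⟨i, hmax (pfib part i) (hfi i) hAi⟩
  · rintro ⟨i, rfl⟩
    refine ⟨hfi i, fun B hB hsub => ?_⟩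
    apply Finset.Subset.antisymm hsub
    intro b hb
    obtain ⟨a, ha⟩ := pfib_nonempty part hsurj i
    rw [indep_iff part G hadj] at hB
    have := hB a (hsub ha) b hb
    exact (mem_pfib part).2 (this ▸ (mem_pfib part).1 ha)

end A

lemma vd_wedge : ∀ (n : ℕ) (S : Finset (Finset V)), S.card = n → S.Nonempty →
    (∀ P ∈ S, P.Nonempty) →
    (∀ P ∈ S, ∀ Q ∈ S, P ≠ Q → Disjoint P Q) →
    (∀ P ∈ S, ∀ Q ∈ S, 2 ≤ P.card → 2 ≤ Q.card → P = Q) →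
    VertexDecomposable {A : Finset V | ∃ P ∈ S, A ⊆ P} := by
  intro n
  induction n with
  | zero =>
    intro S hcard hSne _ _ _
    rw [Finset.card_eq_zero] at hcard
    subst hcard
    exact absurd hSne (by simp)
  | succ n IH =>
    intro S hcard hSne hPne hdisj hone
    rcases Nat.eq_zero_or_pos n with rfl | hn
    · obtain ⟨P, rfl⟩ := Finset.card_eq_one.1 hcard
      exact .simplex _ (Or.inr ⟨P, by ext A; simp⟩)
    · have h2 : 1 < S.card := by omega
      have hsing : ∃ P ∈ S, P.card = 1 := by
        by_contra h
        push_neg at h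
        obtain ⟨P, hP, Q, hQ, hPQ⟩ := Finset.one_lt_card.1 h2
        have hPc : 2 ≤ P.card := by
          have h1 := (hPne P hP).card_pos
          have h2 := h P hP
          omega
        have hQc : 2 ≤ Q.card := by
          have h1 := (hPne Q hQ).card_pos
          have h2 := h Q hQ
          omega
        exact hPQ (hone P hP Q hQ hPc hQc)
      obtain ⟨P, hP, hP1⟩ := hsing
      obtain ⟨v, rfl⟩ := Finset.card_eq_one.1 hP1
      set Δ : Set (Finset V) := {A : Finset V | ∃ P ∈ S, A ⊆ P} with hΔ
      have hvQ : ∀ Q ∈ S.erase {v}, v ∉ Q := by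
        intro Q hQ hv
        have hd := hdisj _ hP Q (Finset.mem_of_mem_erase hQ) (Finset.ne_of_mem_erase hQ).symm
        exact (Finset.disjoint_left.1 hd (Finset.mem_singleton_self v)) hv
      have hEne : (S.erase {v}).Nonempty := by
        rw [← Finset.card_pos, Finset.card_erase_of_mem hP, hcard]
        omega
      obtain ⟨Q0, hQ0⟩ := hEne
      have hdel : delC Δ v = {A : Finset V | ∃ P ∈ S.erase {v}, A ⊆ P} := by
        ext A
        constructor
        · rintro ⟨⟨Q, hQ, hAQ⟩, hvA⟩
          by_cases hQv : Q = {v}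
          · subst hQv
            rcases Finset.subset_singleton_iff.1 hAQ with rfl | rfl
            · exact ⟨Q0, hQ0, Finset.empty_subset _⟩
            · exact absurd (Finset.mem_singleton_self v) hvA
          · exact ⟨Q, Finset.mem_erase.2 ⟨hQv, hQ⟩, hAQ⟩
        · rintro ⟨Q, hQ, hAQ⟩
          exact ⟨⟨Q, Finset.mem_of_mem_erase hQ, hAQ⟩, fun hv => hvQ Q hQ (hAQ hv)⟩
      have hlink : linkC Δ v = {A : Finset V | A ⊆ (∅ : Finset V)} := by
        ext A
        constructor
        · rintro ⟨hvA, Q, hQ, hins⟩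
          have hQv : Q = {v} := by
            by_contra h
            exact hvQ Q (Finset.mem_erase.2 ⟨h, hQ⟩) (hins (Finset.mem_insert_self v A))
          subst hQv
          intro a ha
          have h1 : a ∈ insert v A := Finset.mem_insert_of_mem ha
          have h2 := Finset.mem_singleton.1 (hins h1)
          subst h2
          exact absurd ha hvA
        · intro h
          have hA : A = ∅ := Finset.subset_empty.1 h
          subst hA
          exact ⟨Finset.notMem_empty v, {v}, hP, by simp⟩
      refine VertexDecomposable.step Δ v ?_ ?_ ?_
      · rw [hdel]
        exact IH (S.erase {v}) (by rw [Finset.card_erase_of_mem hP, hcard]; omega) ⟨Q0, hQ0⟩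
          (fun P hP' => hPne P (Finset.mem_of_mem_erase hP'))
          (fun P hP' Q hQ' => hdisj P (Finset.mem_of_mem_erase hP') Q (Finset.mem_of_mem_erase hQ'))
          (fun P hP' Q hQ' => hone P (Finset.mem_of_mem_erase hP') Q (Finset.mem_of_mem_erase hQ'))
      · rw [hlink]
        exact .simplex _ (Or.inr ⟨∅, rfl⟩)
      · intro A hA hfacet
        rw [hlink] at hA
        have hAe : A = ∅ := Finset.subset_empty.1 hA
        subst hAe
        have hQ0ne := hPne Q0 (Finset.mem_of_mem_erase hQ0)
        have heq : (∅ : Finset V) = Q0 := by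
          apply hfacet.2 Q0 ?_ (Finset.empty_subset _)
          rw [hdel]
          exact ⟨Q0, hQ0, Finset.Subset.refl _⟩
        exact hQ0ne.ne_empty heq.symm
lemma not_vd_bad : ∀ (Δ : Set (Finset V)), VertexDecomposable Δ →
    ∀ (S : Set (Finset V)),
    (∀ P ∈ S, ∀ Q ∈ S, P ≠ Q → Disjoint P Q) →
    Δ = {A : Finset V | ∃ P ∈ S, A ⊆ P} →
    ∀ P1 ∈ S, ∀ P2 ∈ S, P1 ≠ P2 → 2 ≤ P1.card → 2 ≤ P2.card → False := by
  intro Δ h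
  induction h with
  | simplex Δ hs =>
    intro S hdisj hΔ P1 h1 P2 h2 h12 hc1 hc2
    have hmem : ∀ A : Finset V, A ∈ Δ ↔ ∃ P ∈ S, A ⊆ P := fun A => Set.ext_iff.1 hΔ A
    rcases hs with rfl | ⟨F, rfl⟩
    · exact (hmem P1).2 ⟨P1, h1, Finset.Subset.refl _⟩
    · have m1 : P1 ⊆ F := (hmem P1).2 ⟨P1, h1, Finset.Subset.refl _⟩
      have m2 : P2 ⊆ F := (hmem P2).2 ⟨P2, h2, Finset.Subset.refl _⟩
      obtain ⟨Q, hQ, hsub⟩ := (hmem (P1 ∪ P2)).1 (Finset.union_subset m1 m2)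
      have key : ∀ R, R ∈ S → 2 ≤ R.card → R ⊆ Q → Q = R := by
        intro R hR hcR hsubR
        by_contra hne
        have hd := hdisj Q hQ R hR hne
        have hRe : R = ∅ := Finset.eq_empty_of_forall_notMem
          (fun a ha => Finset.disjoint_left.1 hd (hsubR ha) ha)
        rw [hRe] at hcR
        simp at hcR
      have e1 := key P1 h1 hc1 (Finset.subset_union_left.trans hsub)
      have e2 := key P2 h2 hc2 (Finset.subset_union_right.trans hsub)
      exact h12 (e1.symm.trans e2)
  | step Δ v hdelv hlinkv hnf IHdel IHlink =>
    intro S hdisj hΔ P1 h1 P2 h2 h12 hc1 hc2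
    have hmem : ∀ A : Finset V, A ∈ Δ ↔ ∃ P ∈ S, A ⊆ P := fun A => Set.ext_iff.1 hΔ A
    by_cases hv : ∃ P ∈ S, v ∈ P
    · obtain ⟨P, hPS, hvP⟩ := hv
      by_cases hcP : 2 ≤ P.card
      · -- P.erase v is in the link and is a facet of the deletion
        refine hnf (P.erase v) ⟨Finset.notMem_erase v P, ?_⟩ ⟨⟨?_, Finset.notMem_erase v P⟩, ?_⟩
        · exact (hmem _).2 ⟨P, hPS, by rw [Finset.insert_erase hvP]⟩
        · exact (hmem _).2 ⟨P, hPS, Finset.erase_subset v P⟩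
        · intro B hB hsub
          obtain ⟨hBΔ, hvB⟩ := hB
          obtain ⟨Q, hQS, hBQ⟩ := (hmem B).1 hBΔ
          have hEne : (P.erase v).Nonempty := by
            rw [← Finset.card_pos, Finset.card_erase_of_mem hvP]
            omega
          obtain ⟨a, ha⟩ := hEne
          have hQP : Q = P := by
            by_contra h
            exact Finset.disjoint_left.1 (hdisj Q hQS P hPS h) (hBQ (hsub ha))
              (Finset.mem_of_mem_erase ha)
          subst hQP
          apply Finset.Subset.antisymm hsub
          intro b hb
          exact Finset.mem_erase.2 ⟨fun h => hvB (h ▸ hb), hBQ hb⟩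
      · -- P = {v}; delete v and induct with S \ {P}
        have hPv : P = {v} := by
          have h1' : P.card ≤ 1 := by omega
          exact Finset.eq_singleton_iff_unique_mem.2
            ⟨hvP, fun b hb => Finset.card_le_one.1 h1' b hb v hvP⟩
        have h1P : P1 ≠ P := by
          intro h
          rw [h, hPv] at hc1
          simp at hc1
        have h2P : P2 ≠ P := by
          intro h
          rw [h, hPv] at hc2
          simp at hc2
        refine IHdel (S \ {P}) ?_ ?_ P1 ⟨h1, h1P⟩ P2 ⟨h2, h2P⟩ h12 hc1 hc2
        · intro R hR Q hQ hne
          exact hdisj R hR.1 Q hQ.1 hne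
        · ext A
          constructor
          · rintro ⟨hAΔ, hvA⟩
            obtain ⟨Q, hQS, hAQ⟩ := (hmem A).1 hAΔ
            by_cases hQP : Q = P
            · subst hQP
              rw [hPv] at hAQ
              rcases Finset.subset_singleton_iff.1 hAQ with rfl | rfl
              · exact ⟨P1, ⟨h1, h1P⟩, Finset.empty_subset _⟩
              · exact absurd (Finset.mem_singleton_self v) hvA
            · exact ⟨Q, ⟨hQS, hQP⟩, hAQ⟩
          · rintro ⟨Q, ⟨hQS, hQP⟩, hAQ⟩
            refine ⟨(hmem A).2 ⟨Q, hQS, hAQ⟩, fun hvA => ?_⟩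
            exact Finset.disjoint_left.1 (hdisj Q hQS P hPS hQP) (hAQ hvA) hvP
    · -- v belongs to no part: deletion is the whole complex
      push_neg at hv
      refine IHdel S hdisj ?_ P1 h1 P2 h2 h12 hc1 hc2
      ext A
      constructor
      · rintro ⟨hAΔ, _⟩
        exact (hmem A).1 hAΔ
      · rintro ⟨Q, hQS, hAQ⟩
        exact ⟨(hmem A).2 ⟨Q, hQS, hAQ⟩, fun hvA => hv Q hQS (hAQ hvA)⟩


section C
variable {t : ℕ} (part : V → Fin t) (G : SimpleGraph V)
lemma mem_indComplex_iff (hadj : ∀ a b : V, G.Adj a b ↔ part a ≠ part b)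
    (ht : 0 < t) (A : Finset V) :
    A ∈ indComplex G ↔ ∃ i, A ⊆ pfib part i := by
  rw [indComplex, Set.mem_setOf_eq, indep_iff part G hadj]
  constructor
  · intro h
    rcases A.eq_empty_or_nonempty with rfl | ⟨a, ha⟩
    · exact ⟨⟨0, ht⟩, by simp⟩
    · exact ⟨part a, fun b hb => (mem_pfib part).2 (h b hb a ha)⟩
  · rintro ⟨i, hA⟩ a ha b hb
    rw [(mem_pfib part).1 (hA ha), (mem_pfib part).1 (hA hb)]
end C

section B
variable {t : ℕ} (part : V → Fin t) (G : SimpleGraph V)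

lemma shellable_of_onebig (hsurj : Function.Surjective part)
    (hadj : ∀ a b : V, G.Adj a b ↔ part a ≠ part b)
    (hone : ∀ i j : Fin t, 2 ≤ (pfib part i).card → 2 ≤ (pfib part j).card → i = j) :
    Shellable G := by
  rcases Nat.eq_zero_or_pos t with rfl | ht
  · -- V is empty
    have hV : IsEmpty V := ⟨fun v => (part v).elim0⟩
    refine ⟨1, fun _ => ∅, Function.injective_of_subsingleton _, ?_, ?_⟩
    · intro A
      have hA : A = ∅ := Finset.eq_empty_of_forall_notMem fun a _ => hV.elim a
      subst hA
      constructor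
      · intro _
        exact ⟨0, rfl⟩
      · intro _
        refine ⟨fun a b ha _ _ => hV.elim a, fun B _ _ => ?_⟩
        exact (Finset.eq_empty_of_forall_notMem fun a _ => hV.elim a).symm
    · intro i j hij
      exact absurd hij (not_lt.2 (le_of_eq (Subsingleton.elim j i)))
  · have : NeZero t := ⟨ht.ne'⟩
    obtain ⟨σ, hσ⟩ : ∃ σ : Equiv.Perm (Fin t),
        ∀ j : Fin t, j ≠ 0 → (pfib part (σ j)).card ≤ 1 := by
      by_cases hbig : ∃ i, 2 ≤ (pfib part i).card
      · obtain ⟨i0, hi0⟩ := hbig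
        refine ⟨Equiv.swap 0 i0, fun j hj => ?_⟩
        by_contra h
        push_neg at h
        have heq : Equiv.swap 0 i0 j = i0 := hone _ _ h hi0
        have h0 : Equiv.swap 0 i0 (0 : Fin t) = i0 := Equiv.swap_apply_left 0 i0
        exact hj ((Equiv.swap 0 i0).injective (heq.trans h0.symm))
      · push_neg at hbig
        refine ⟨Equiv.refl _, fun j _ => ?_⟩
        simp only [Equiv.refl_apply]
        have := hbig j
        omega
    refine ⟨t, fun j => pfib part (σ j), ?_, ?_, ?_⟩
    · intro a b hab
      exact σ.injective (pfib_injective part hsurj hab)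
    · intro A
      rw [facet_iff part G hsurj hadj ht A]
      constructor
      · rintro ⟨i, rfl⟩
        exact ⟨σ.symm i, by simp⟩
      · rintro ⟨j, rfl⟩
        exact ⟨σ j, rfl⟩
    · intro i j hij
      have hj0 : j ≠ 0 := by
        rintro rfl
        simp [Fin.lt_def] at hij
      have hcard : (pfib part (σ j)).card = 1 :=
        le_antisymm (hσ j hj0) (pfib_nonempty part hsurj _).card_pos
      obtain ⟨v, hv⟩ := Finset.card_eq_one.1 hcard
      have hvj : v ∈ pfib part (σ j) := by
        rw [hv]
        exact Finset.mem_singleton_self v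
      have hvi : v ∉ pfib part (σ i) := by
        intro hvi
        have hne : σ i ≠ σ j := fun h => (ne_of_lt hij) (σ.injective h)
        exact Finset.disjoint_left.1 (pfib_disjoint part hne) hvi hvj
      refine ⟨v, hvj, hvi, i, hij, ?_⟩
      show pfib part (σ j) \ pfib part (σ i) = {v}
      rw [hv]
      exact Finset.sdiff_eq_self_iff_disjoint.2 (Finset.disjoint_singleton_left.2 hvi)

lemma not_shellable_of_twobig (hsurj : Function.Surjective part)
    (hadj : ∀ a b : V, G.Adj a b ↔ part a ≠ part b)
    (i0 i1 : Fin t) (hne : i0 ≠ i1)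
    (hc0 : 2 ≤ (pfib part i0).card) (hc1 : 2 ≤ (pfib part i1).card) :
    ¬ Shellable G := by
  have ht : 0 < t := i0.pos
  rintro ⟨s, F, hinj, hfac, hshell⟩
  obtain ⟨j0, hj0⟩ := (hfac (pfib part i0)).1 ((facet_iff part G hsurj hadj ht _).2 ⟨i0, rfl⟩)
  obtain ⟨j1, hj1⟩ := (hfac (pfib part i1)).1 ((facet_iff part G hsurj hadj ht _).2 ⟨i1, rfl⟩)
  have hjne : j0 ≠ j1 := by
    rintro rfl
    rw [hj0] at hj1
    exact hne (pfib_injective part hsurj hj1)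
  have key : ∀ (m : Fin t) (i j : Fin s),
      2 ≤ (pfib part m).card → i < j → F j = pfib part m → False := by
    intro m i j hm hij hFj
    obtain ⟨v, hvj, hvi, l, hl, hdiff⟩ := hshell i j hij
    obtain ⟨k, hk⟩ := (facet_iff part G hsurj hadj ht _).1 ((hfac (F l)).2 ⟨l, rfl⟩)
    have hkm : m ≠ k := by
      rintro rfl
      exact (ne_of_lt hl) (hinj (hk.trans hFj.symm))
    have hself : F j \ F l = F j := by
      rw [hFj, hk]
      exact Finset.sdiff_eq_self_iff_disjoint.2 (pfib_disjoint part hkm)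
    rw [hself, hFj] at hdiff
    rw [hdiff] at hm
    simp at hm
  rcases lt_or_gt_of_ne hjne with h | h
  · exact key i1 j0 j1 hc1 h hj1
  · exact key i0 j1 j0 hc0 h hj0

lemma vd_of_onebig (hsurj : Function.Surjective part)
    (hadj : ∀ a b : V, G.Adj a b ↔ part a ≠ part b)
    (hone : ∀ i j : Fin t, 2 ≤ (pfib part i).card → 2 ≤ (pfib part j).card → i = j) :
    VertexDecomposable (indComplex G) := by
  rcases Nat.eq_zero_or_pos t with rfl | ht
  · have hV : IsEmpty V := ⟨fun v => (part v).elim0⟩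
    refine .simplex _ (Or.inr ⟨∅, ?_⟩)
    ext A
    have hA : A = ∅ := Finset.eq_empty_of_forall_notMem fun a _ => hV.elim a
    subst hA
    constructor
    · intro _
      exact Finset.Subset.refl _
    · intro _ a b ha _ _
      exact hV.elim a
  · set S : Finset (Finset V) := Finset.univ.image (fun i : Fin t => pfib part i) with hS
    have hmemS : ∀ P, P ∈ S ↔ ∃ i, pfib part i = P := by
      intro P
      simp [hS]
    have hcomplex : indComplex G = {A : Finset V | ∃ P ∈ S, A ⊆ P} := by
      ext A
      rw [mem_indComplex_iff part G hadj ht]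
      constructor
      · rintro ⟨i, h⟩
        exact ⟨pfib part i, (hmemS _).2 ⟨i, rfl⟩, h⟩
      · rintro ⟨P, hP, h⟩
        obtain ⟨i, rfl⟩ := (hmemS _).1 hP
        exact ⟨i, h⟩
    rw [hcomplex]
    refine vd_wedge S.card S rfl ⟨pfib part ⟨0, ht⟩, (hmemS _).2 ⟨_, rfl⟩⟩ ?_ ?_ ?_
    · intro P hP
      obtain ⟨i, rfl⟩ := (hmemS _).1 hP
      exact pfib_nonempty part hsurj i
    · intro P hP Q hQ hne'
      obtain ⟨i, rfl⟩ := (hmemS _).1 hP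
      obtain ⟨j, rfl⟩ := (hmemS _).1 hQ
      exact pfib_disjoint part (fun h => hne' (by rw [h]))
    · intro P hP Q hQ h2P h2Q
      obtain ⟨i, rfl⟩ := (hmemS _).1 hP
      obtain ⟨j, rfl⟩ := (hmemS _).1 hQ
      rw [hone i j h2P h2Q]

lemma not_vd_of_twobig (hsurj : Function.Surjective part)
    (hadj : ∀ a b : V, G.Adj a b ↔ part a ≠ part b)
    (i0 i1 : Fin t) (hne : i0 ≠ i1)
    (hc0 : 2 ≤ (pfib part i0).card) (hc1 : 2 ≤ (pfib part i1).card) :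
    ¬ VertexDecomposable (indComplex G) := by
  intro hvd
  have ht : 0 < t := i0.pos
  refine not_vd_bad (indComplex G) hvd (Set.range (fun i => pfib part i)) ?_ ?_
    (pfib part i0) ⟨i0, rfl⟩ (pfib part i1) ⟨i1, rfl⟩
    (fun h => hne (pfib_injective part hsurj h)) hc0 hc1
  · rintro P ⟨i, rfl⟩ Q ⟨j, rfl⟩ hne'
    exact pfib_disjoint part (fun h => hne' (by rw [h]))
  · ext A
    rw [mem_indComplex_iff part G hadj ht]
    constructor
    · rintro ⟨i, h⟩
      exact ⟨pfib part i, ⟨i, rfl⟩, h⟩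
    · rintro ⟨P, ⟨i, rfl⟩, h⟩
      exact ⟨i, h⟩

end B

/-- For a complete t-partite graph, shellability of the independence complex is
equivalent to vertex decomposability. -/
theorem stmt_13 (G : SimpleGraph V) (t : ℕ) (part : V → Fin t)
    (hsurj : Function.Surjective part)
    (hadj : ∀ a b : V, G.Adj a b ↔ part a ≠ part b) :
    Shellable G ↔ VertexDecomposable (indComplex G) := by
  by_cases hone : ∀ i j : Fin t, 2 ≤ (pfib part i).card → 2 ≤ (pfib part j).card → i = j
  · constructor
    · intro _
      exact vd_of_onebig part G hsurj hadj hone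
    · intro _
      exact shellable_of_onebig part G hsurj hadj hone
  · push_neg at hone
    obtain ⟨i, j, hi, hj, hij⟩ := hone
    constructor
    · intro h
      exact absurd h (not_shellable_of_twobig part G hsurj hadj i j hij hi hj)
    · intro h
      exact absurd h (not_vd_of_twobig part G hsurj hadj i j hij hi hj)
end
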